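/- Let A be an n×n symmetric positive definite real matrix and b ∈ ℝⁿ. Fix α > 0 and set A₀ = αI, H₀ = α⁻¹I. Let the probabilistic linear solver iteration be defined as: x₀ = H₀b, r₀ = Ax₀ − b, and for i ≥ 1: sᵢ = −H_{i−1}r_{i−1}, yᵢ = Asᵢ, αᵢ = −(sᵢᵀr_{i−1})/(sᵢᵀyᵢ), xᵢ = x_{i−1} + αᵢsᵢ, rᵢ = r_{i−1} + αᵢyᵢ, Hᵢ = H₀ + Δᵢ Uᵢᵀ + Uᵢ Δᵢᵀ − Uᵢ Yᵢᵀ Δᵢ Uᵢᵀ with Δᵢ = Sᵢ − H₀Yᵢ, Uᵢ = W₀^H Yᵢ(Yᵢᵀ W₀^H Yᵢ)⁻¹, where Sᵢ, Yᵢ collect the first i actions and observations. Assume the inverse-model covariance factor W₀^H is symmetric positive definite and, together with a symmetric matrix W₀^A, satisfies W₀^A Sᵢ = Yᵢ and Sᵢᵀ(W₀^A A₀⁻¹ − A W₀^H) = 0 for all i ≤ k, and that the iteration is well defined (sᵢ ≠ 0, Yᵢᵀ W₀^H Yᵢ invertible) up to step k. Let (xᵢ^{CG}) be the conjugate gradient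 iterates for Ax = b started at x₀^{CG} = x₀: r₀^{CG} = Ax₀ − b, d₁ = −r₀^{CG}, and for i ≥ 1: αᵢ^{CG} = −(dᵢᵀ r_{i−1}^{CG})/(dᵢᵀ A dᵢ), xᵢ^{CG} = x_{i−1}^{CG} + αᵢ^{CG} dᵢ, rᵢ^{CG} = A xᵢ^{CG} − b, d_{i+1} = −rᵢ^{CG} + ((rᵢ^{CG})ᵀ rᵢ^{CG} / (r_{i−1}^{CG})ᵀ r_{i−1}^{CG}) dᵢ. Then xᵢ = xᵢ^{CG} for all 0 ≤ i ≤ k. -/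

import Mathlib

open Matrix

lemma dot_symm {n : ℕ} (A : Matrix (Fin n) (Fin n) ℝ) (hA : Aᵀ = A) (x z : Fin n → ℝ) :
    A.mulVec x ⬝ᵥ z = x ⬝ᵥ A.mulVec z := by
  calc A.mulVec x ⬝ᵥ z = z ⬝ᵥ A.mulVec x := dotProduct_comm _ _
    _ = (z ᵥ* A) ⬝ᵥ x := dotProduct_mulVec _ _ _
    _ = (z ᵥ* Aᵀ) ⬝ᵥ x := by rw [hA]
    _ = A.mulVec z ⬝ᵥ x := by rw [vecMul_transpose]
    _ = x ⬝ᵥ A.mulVec z := dotProduct_comm _ _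

lemma pos_dot {n : ℕ} {A : Matrix (Fin n) (Fin n) ℝ} (hA : A.PosDef) {x : Fin n → ℝ}
    (hx : x ≠ 0) : 0 < x ⬝ᵥ A.mulVec x := by
  have := hA.dotProduct_mulVec_pos hx
  simpa using this

lemma self_dot_ne {n : ℕ} {x : Fin n → ℝ} (hx : x ≠ 0) : x ⬝ᵥ x ≠ 0 := by
  intro h; exact hx (dotProduct_self_eq_zero.mp h)

lemma cg_facts {n : ℕ} (A : Matrix (Fin n) (Fin n) ℝ) (hA : A.PosDef) (hAs : Aᵀ = A)
    (rCG d : ℕ → Fin n → ℝ) (αCG : ℕ → ℝ)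
    (hd1 : d 1 = -rCG 0)
    (hαCG : ∀ i, αCG (i + 1) = -(d (i + 1) ⬝ᵥ rCG i) / (d (i + 1) ⬝ᵥ A.mulVec (d (i + 1))))
    (hrstep : ∀ i, rCG (i + 1) = rCG i + αCG (i + 1) • A.mulVec (d (i + 1)))
    (hd : ∀ i, d (i + 2) = -rCG (i + 1)
      + ((rCG (i + 1) ⬝ᵥ rCG (i + 1)) / (rCG i ⬝ᵥ rCG i)) • d (i + 1)) :
    ∀ m, (∀ j, j ≤ m → rCG j ≠ 0) →
      (∀ j, j < m → rCG j ⬝ᵥ rCG m = 0) ∧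
      (∀ j, 1 ≤ j → j ≤ m → d j ⬝ᵥ rCG m = 0) ∧
      (∀ j, 1 ≤ j → j ≤ m → d (m + 1) ⬝ᵥ A.mulVec (d j) = 0) ∧
      (d (m + 1) ⬝ᵥ rCG m = -(rCG m ⬝ᵥ rCG m)) ∧
      (∀ j, j ≤ m → αCG (j + 1) ≠ 0) := by
  intro m
  induction m with
  | zero =>
    intro hnz
    have h0 : rCG 0 ≠ 0 := hnz 0 le_rfl
    have hO4 : d 1 ⬝ᵥ rCG 0 = -(rCG 0 ⬝ᵥ rCG 0) := by rw [hd1, neg_dotProduct]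
    have hd1ne : d 1 ≠ 0 := by rw [hd1]; simpa using h0
    refine ⟨by omega, by omega, by omega, hO4, ?_⟩
    intro j hj
    interval_cases j
    rw [hαCG, hO4, neg_neg]
    exact div_ne_zero (self_dot_ne h0) (ne_of_gt (pos_dot hA hd1ne))
  | succ m ih =>
    intro hnz
    obtain ⟨O1, O2, O3, O4, O5⟩ := ih (fun j hj => hnz j (by omega))
    have hrm : rCG m ≠ 0 := hnz m (by omega)
    have hrm1 : rCG (m + 1) ≠ 0 := hnz (m + 1) le_rfl
    have hdm1ne : d (m + 1) ≠ 0 := by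
      intro h0; rw [h0, zero_dotProduct] at O4
      exact hrm (dotProduct_self_eq_zero.mp (neg_eq_zero.mp O4.symm))
    have hdAd : 0 < d (m + 1) ⬝ᵥ A.mulVec (d (m + 1)) := pos_dot hA hdm1ne
    have hαm : αCG (m + 1) = (rCG m ⬝ᵥ rCG m) / (d (m + 1) ⬝ᵥ A.mulVec (d (m + 1))) := by
      rw [hαCG, O4, neg_neg]
    have hαne : αCG (m + 1) ≠ 0 := by
      rw [hαm]; exact div_ne_zero (self_dot_ne hrm) (ne_of_gt hdAd)
    have hαval : αCG (m + 1) * (d (m + 1) ⬝ᵥ A.mulVec (d (m + 1))) = rCG m ⬝ᵥ rCG m := by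
      rw [hαm]; field_simp
    -- O2'
    have O2' : ∀ j, 1 ≤ j → j ≤ m + 1 → d j ⬝ᵥ rCG (m + 1) = 0 := by
      intro j h1 hj
      rw [hrstep m, dotProduct_add, dotProduct_smul, smul_eq_mul]
      rcases eq_or_lt_of_le hj with rfl | hlt
      · rw [O4, hαval]; ring
      · have hjm : j ≤ m := by omega
        have h2 : d j ⬝ᵥ A.mulVec (d (m + 1)) = 0 := by
          rw [← dot_symm A hAs, dotProduct_comm]
          exact O3 j h1 hjm
        rw [O2 j h1 hjm, h2]; ring
    -- O1'
    have O1' : ∀ j, j < m + 1 → rCG j ⬝ᵥ rCG (m + 1) = 0 := by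
      intro j hj
      rcases Nat.eq_zero_or_pos j with rfl | hj1
      · have : rCG 0 = -d 1 := by rw [hd1, neg_neg]
        rw [this, neg_dotProduct, O2' 1 le_rfl (by omega), neg_zero]
      · obtain ⟨l, rfl⟩ : ∃ l, j = l + 1 := ⟨j - 1, by omega⟩
        have : rCG (l + 1) = ((rCG (l + 1) ⬝ᵥ rCG (l + 1)) / (rCG l ⬝ᵥ rCG l)) • d (l + 1)
            - d (l + 2) := by
          rw [hd l]; abel
        rw [this, sub_dotProduct, smul_dotProduct,
          O2' (l + 1) (by omega) (by omega), O2' (l + 2) (by omega) (by omega)]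
        simp
    -- O4'
    have O4' : d (m + 2) ⬝ᵥ rCG (m + 1) = -(rCG (m + 1) ⬝ᵥ rCG (m + 1)) := by
      rw [hd m, add_dotProduct, neg_dotProduct, smul_dotProduct,
        O2' (m + 1) (by omega) le_rfl]
      simp
    -- O5'
    have O5' : ∀ j, j ≤ m + 1 → αCG (j + 1) ≠ 0 := by
      intro j hj
      rcases eq_or_lt_of_le hj with rfl | hlt
      · have hdne : d (m + 2) ≠ 0 := by
          intro h0; rw [h0, zero_dotProduct] at O4'
          exact hrm1 (dotProduct_self_eq_zero.mp (neg_eq_zero.mp O4'.symm))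
        rw [hαCG, O4', neg_neg]
        exact div_ne_zero (self_dot_ne hrm1) (ne_of_gt (pos_dot hA hdne))
      · exact O5 j (by omega)
    -- A d j expression
    have hAd : ∀ l, l ≤ m + 1 → A.mulVec (d (l + 1))
        = (αCG (l + 1))⁻¹ • (rCG (l + 1) - rCG l) := by
      intro l hl
      have h1 : rCG (l + 1) - rCG l = αCG (l + 1) • A.mulVec (d (l + 1)) := by
        rw [hrstep l]; abel
      rw [h1, smul_smul, inv_mul_cancel₀ (O5' l hl), one_smul]
    -- O3'
    have O3' : ∀ j, 1 ≤ j → j ≤ m + 1 → d (m + 2) ⬝ᵥ A.mulVec (d j) = 0 := by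
      intro j h1 hj
      obtain ⟨l, rfl⟩ : ∃ l, j = l + 1 := ⟨j - 1, by omega⟩
      rw [hd m, add_dotProduct, neg_dotProduct, smul_dotProduct, smul_eq_mul]
      rcases eq_or_lt_of_le hj with heq | hlt
      · have hl : m = l := by omega
        subst hl
        rw [hAd m (Nat.le_succ m), dotProduct_smul, dotProduct_smul, smul_eq_mul, smul_eq_mul,
          dotProduct_sub, dotProduct_sub,
          O2' (m + 1) (by omega) le_rfl, dotProduct_comm (rCG (m+1)) (rCG m),
          O1' m (by omega), O4]
        field_simp [hαne, self_dot_ne hrm]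
        ring
      · have hlm : l + 1 ≤ m := by omega
        rw [O3 (l + 1) (by omega) hlm, hAd l (by omega), dotProduct_smul, smul_eq_mul,
          dotProduct_sub,
          dotProduct_comm (rCG (m+1)) (rCG (l+1)), dotProduct_comm (rCG (m+1)) (rCG l),
          O1' (l + 1) (by omega), O1' l (by omega)]
        ring
    exact ⟨O1', O2', O3', O4', O5'⟩

lemma mulVec_sum' {n i : ℕ} {β : Type*} (M : Matrix (Fin n) (Fin i) ℝ) (t : Finset β)
    (f : β → Fin i → ℝ) : M *ᵥ (∑ l ∈ t, f l) = ∑ l ∈ t, M *ᵥ f l := by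
  have := map_sum M.mulVecLin f t
  simp only [Matrix.mulVecLin_apply] at this
  exact this

lemma d_span {n : ℕ} (rCG d : ℕ → Fin n → ℝ) (q : ℕ → ℝ)
    (hd1 : d 1 = -rCG 0)
    (hd : ∀ i, d (i + 2) = -rCG (i + 1) + q i • d (i + 1)) :
    ∀ m, ∃ γ : ℕ → ℝ, d (m + 1) = ∑ l ∈ Finset.range (m + 1), γ l • rCG l := by
  intro m
  induction m with
  | zero => exact ⟨fun _ => -1, by simp [hd1]⟩
  | succ m ih =>
    obtain ⟨γ, hγ⟩ := ih
    refine ⟨fun l => if l = m + 1 then -1 else q m * γ l, ?_⟩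
    rw [hd m, Finset.sum_range_succ]
    simp only [if_pos rfl]
    have h1 : ∑ l ∈ Finset.range (m + 1), (if l = m + 1 then (-1 : ℝ) else q m * γ l) • rCG l
        = ∑ l ∈ Finset.range (m + 1), (q m * γ l) • rCG l := by
      refine Finset.sum_congr rfl fun l hl => ?_
      rw [if_neg (by simp only [Finset.mem_range] at hl; omega)]
    have h2 : ∑ l ∈ Finset.range (m + 1), (q m * γ l) • rCG l
        = q m • ∑ l ∈ Finset.range (m + 1), γ l • rCG l := by
      rw [Finset.smul_sum]
      exact Finset.sum_congr rfl fun l _ => (smul_smul _ _ _).symm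
    rw [h1, h2, ← hγ]
    simp only [if_true, neg_one_smul]
    abel

lemma r_tel {n : ℕ} (r ys : ℕ → Fin n → ℝ) (c : ℕ → ℝ)
    (hr : ∀ i, r (i + 1) = r i + c (i + 1) • ys (i + 1)) :
    ∀ l i, l ≤ i → r i = r l + ∑ j ∈ Finset.Ico l i, c (j + 1) • ys (j + 1) := by
  intro l i h
  induction i, h using Nat.le_induction with
  | base => simp
  | succ i hli ih =>
    rw [hr i, ih, Finset.sum_Ico_succ_top hli]
    abel

/-- With a scalar prior mean and compatible covariance factors, the iterates of the
probabilistic linear solver coincide with the conjugate gradient iterates. -/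
theorem stmt_1
    {n k : ℕ} (A : Matrix (Fin n) (Fin n) ℝ) (hA : A.PosDef)
    (b : Fin n → ℝ) (a : ℝ) (ha : 0 < a)
    (A₀ H₀ : Matrix (Fin n) (Fin n) ℝ)
    (hA₀ : A₀ = a • (1 : Matrix (Fin n) (Fin n) ℝ))
    (hH₀def : H₀ = a⁻¹ • (1 : Matrix (Fin n) (Fin n) ℝ))
    (W₀H W₀A : Matrix (Fin n) (Fin n) ℝ) (hWH : W₀H.PosDef) (hWA : W₀A.IsSymm)
    (x r s y : ℕ → Fin n → ℝ) (α : ℕ → ℝ)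
    (H : ℕ → Matrix (Fin n) (Fin n) ℝ)
    (S Y Δ U : (i : ℕ) → Matrix (Fin n) (Fin i) ℝ)
    (hS : ∀ i (j : Fin n) (l : Fin i), S i j l = s (l.val + 1) j)
    (hY : ∀ i, Y i = A * S i)
    (hΔ : ∀ i, Δ i = S i - H₀ * Y i)
    (hU : ∀ i, U i = W₀H * Y i * ((Y i)ᵀ * W₀H * Y i)⁻¹)
    (hWAS : ∀ i, i ≤ k → W₀A * S i = Y i)
    (hcompat : ∀ i, i ≤ k → (S i)ᵀ * (W₀A * A₀⁻¹ - A * W₀H) = 0)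
    (hx0 : x 0 = H₀.mulVec b)
    (hr0 : r 0 = A.mulVec (x 0) - b)
    (hH0 : H 0 = H₀)
    (hs : ∀ i, s (i + 1) = -(H i).mulVec (r i))
    (hy : ∀ i, y (i + 1) = A.mulVec (s (i + 1)))
    (hα : ∀ i, α (i + 1) = -(s (i + 1) ⬝ᵥ r i) / (s (i + 1) ⬝ᵥ y (i + 1)))
    (hx : ∀ i, x (i + 1) = x i + α (i + 1) • s (i + 1))
    (hr : ∀ i, r (i + 1) = r i + α (i + 1) • y (i + 1))
    (hH : ∀ i, H (i + 1) = H₀ + Δ (i + 1) * (U (i + 1))ᵀ + U (i + 1) * (Δ (i + 1))ᵀ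
      - U (i + 1) * (Y (i + 1))ᵀ * Δ (i + 1) * (U (i + 1))ᵀ)
    (h_wd : ∀ i, 1 ≤ i → i ≤ k → s i ≠ 0 ∧ IsUnit ((Y i)ᵀ * W₀H * Y i).det)
    (xCG rCG d : ℕ → Fin n → ℝ) (αCG : ℕ → ℝ)
    (hxCG0 : xCG 0 = x 0)
    (hrCG0 : rCG 0 = A.mulVec (xCG 0) - b)
    (hd1 : d 1 = -rCG 0)
    (hαCG : ∀ i, αCG (i + 1) = -(d (i + 1) ⬝ᵥ rCG i) / (d (i + 1) ⬝ᵥ A.mulVec (d (i + 1))))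
    (hxCG : ∀ i, xCG (i + 1) = xCG i + αCG (i + 1) • d (i + 1))
    (hrCG : ∀ i, rCG (i + 1) = A.mulVec (xCG (i + 1)) - b)
    (hd : ∀ i, d (i + 2) = -rCG (i + 1)
      + ((rCG (i + 1) ⬝ᵥ rCG (i + 1)) / (rCG i ⬝ᵥ rCG i)) • d (i + 1)) :
    ∀ i, i ≤ k → x i = xCG i := by
  have hane : a ≠ 0 := ne_of_gt ha
  have hAs : Aᵀ = A := by
    have h := hA.1.eq
    rwa [conjTranspose_eq_transpose_of_trivial] at h
  have hWHs : W₀Hᵀ = W₀H := by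
    have h := hWH.1.eq
    rwa [conjTranspose_eq_transpose_of_trivial] at h
  -- entries of Y
  have hYent : ∀ i (j : Fin n) (t : Fin i), Y i j t = y (t.1 + 1) j := by
    intro i j t
    rw [hY, Matrix.mul_apply, hy t.1]
    simp [Matrix.mulVec, dotProduct, hS]
  have hScol : ∀ i (u : Fin i → ℝ), (S i) *ᵥ u = ∑ t : Fin i, u t • s (t.1 + 1) := by
    intro i u; funext j
    simp [Matrix.mulVec, dotProduct, hS, Finset.sum_apply, mul_comm]
  have hYcol : ∀ i (u : Fin i → ℝ), (Y i) *ᵥ u = ∑ t : Fin i, u t • y (t.1 + 1) := by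
    intro i u; funext j
    simp [Matrix.mulVec, dotProduct, hYent, Finset.sum_apply, mul_comm]
  have hYTdot : ∀ i (z : Fin n → ℝ) (t : Fin i), ((Y i)ᵀ *ᵥ z) t = y (t.1 + 1) ⬝ᵥ z := by
    intro i z t
    simp [Matrix.mulVec, dotProduct, transpose_apply, hYent]
  have hSTdot : ∀ i (z : Fin n → ℝ) (t : Fin i), ((S i)ᵀ *ᵥ z) t = s (t.1 + 1) ⬝ᵥ z := by
    intro i z t
    simp [Matrix.mulVec, dotProduct, transpose_apply, hS]
  -- CG residual recursion
  have hrCGi : ∀ i, rCG i = A *ᵥ xCG i - b := by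
    intro i
    cases i with
    | zero => exact hrCG0
    | succ l => exact hrCG l
  have hrstep : ∀ i, rCG (i + 1) = rCG i + αCG (i + 1) • A *ᵥ d (i + 1) := by
    intro i
    calc rCG (i + 1) = A *ᵥ (xCG i + αCG (i + 1) • d (i + 1)) - b := by rw [hrCG i, hxCG i]
      _ = (A *ᵥ xCG i - b) + αCG (i + 1) • A *ᵥ d (i + 1) := by
          rw [mulVec_add, mulVec_smul]; abel
      _ = rCG i + αCG (i + 1) • A *ᵥ d (i + 1) := by rw [hrCGi i]
  -- prior compatibility consequences
  have hA₀inv : A₀⁻¹ = a⁻¹ • (1 : Matrix (Fin n) (Fin n) ℝ) := by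
    apply Matrix.inv_eq_right_inv
    rw [hA₀, Matrix.smul_mul, Matrix.mul_smul, smul_smul, mul_inv_cancel₀ hane, one_smul, mul_one]
  have hWY : ∀ i, i ≤ k → W₀H * Y i = a⁻¹ • Y i := by
    intro i hik
    have h1 := hcompat i hik
    rw [hA₀inv, Matrix.mul_sub, sub_eq_zero] at h1
    have h2 : a⁻¹ • ((S i)ᵀ * W₀A) = (S i)ᵀ * (A * W₀H) := by
      rw [← h1, Matrix.mul_smul, Matrix.mul_smul, mul_one]
    have h3 := congrArg Matrix.transpose h2
    rw [transpose_smul, transpose_mul, transpose_mul, transpose_mul, transpose_transpose,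
      hWA.eq, hWHs, hAs] at h3
    rw [hWAS i hik] at h3
    rw [Matrix.mul_assoc, ← hY i] at h3
    exact h3.symm
  have hYWYeq : ∀ i, i ≤ k → (Y i)ᵀ * W₀H * Y i = a⁻¹ • ((Y i)ᵀ * Y i) := by
    intro i hik
    rw [Matrix.mul_assoc, hWY i hik, Matrix.mul_smul]
  have hdetYY : ∀ i, 1 ≤ i → i ≤ k → IsUnit ((Y i)ᵀ * Y i).det := by
    intro i h1 hik
    have h2 := (h_wd i h1 hik).2
    rw [hYWYeq i hik, Matrix.det_smul, isUnit_iff_ne_zero] at h2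
    rw [isUnit_iff_ne_zero]
    intro h0
    rw [h0, mul_zero] at h2
    exact h2 rfl
  have hUeq : ∀ i, 1 ≤ i → i ≤ k → U i = Y i * ((Y i)ᵀ * Y i)⁻¹ := by
    intro i h1 hik
    have hdet := hdetYY i h1 hik
    have hinv : ((Y i)ᵀ * W₀H * Y i)⁻¹ = a • ((Y i)ᵀ * Y i)⁻¹ := by
      rw [hYWYeq i hik]
      apply Matrix.inv_eq_right_inv
      rw [Matrix.smul_mul, Matrix.mul_smul, smul_smul, inv_mul_cancel₀ hane, one_smul,
        Matrix.mul_nonsing_inv _ hdet]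
    rw [hU, hinv, hWY i hik, Matrix.smul_mul, Matrix.mul_smul, smul_smul,
      inv_mul_cancel₀ hane, one_smul]
  have htel := r_tel r y α hr
  -- main induction
  suffices hP : ∀ i, i ≤ k →
      (∀ l, l ≤ i → x l = xCG l ∧ r l = rCG l) ∧
      (∀ j, 1 ≤ j → j ≤ i → ∃ c : ℝ, c ≠ 0 ∧ s j = c • d j) by
    intro i hik
    exact ((hP i hik).1 i le_rfl).1
  intro i
  induction i with
  | zero =>
    intro _
    refine ⟨?_, by omega⟩
    intro l hl
    interval_cases l
    exact ⟨hxCG0.symm, by rw [hrCG0, hxCG0]; exact hr0⟩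
  | succ i ih =>
    intro hik1
    have hik : i ≤ k := by omega
    obtain ⟨hxr, hsd⟩ := ih hik
    have hri_eq : r i = rCG i := (hxr i le_rfl).2
    have hs1ne : s (i + 1) ≠ 0 := (h_wd (i + 1) (by omega) hik1).1
    have hnz : ∀ j, j ≤ i → rCG j ≠ 0 := by
      intro j hj h0
      have hj1 : j + 1 ≤ k := by omega
      apply (h_wd (j + 1) (by omega) hj1).1
      rw [hs j, (hxr j (by omega)).2, h0, mulVec_zero, neg_zero]
    obtain ⟨O1, O2, O3, O4, O5⟩ := cg_facts A hA hAs rCG d αCG hd1 hαCG hrstep hd i hnz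
    have key : ∃ c : ℝ, c ≠ 0 ∧ s (i + 1) = c • d (i + 1) := by
      rcases Nat.eq_zero_or_pos i with rfl | hipos
      · refine ⟨a⁻¹, inv_ne_zero hane, ?_⟩
        simp only [Nat.zero_add]
        rw [hs 0, hH0, hH₀def, smul_mulVec, one_mulVec, hri_eq, hd1, smul_neg]
      · obtain ⟨m, rfl⟩ : ∃ m, i = m + 1 := ⟨i - 1, by omega⟩
        have hdet : IsUnit ((Y (m + 1))ᵀ * Y (m + 1)).det := hdetYY (m + 1) (by omega) hik
        set G := ((Y (m + 1))ᵀ * Y (m + 1))⁻¹ with hGdef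
        have hG1 : G * ((Y (m + 1))ᵀ * Y (m + 1)) = 1 := Matrix.nonsing_inv_mul _ hdet
        have hGs : Gᵀ = G := by
          rw [hGdef, Matrix.transpose_nonsing_inv, transpose_mul, transpose_transpose]
        have hUi := hUeq (m + 1) (by omega) hik
        set v : Fin (m + 1) → ℝ := G *ᵥ ((Y (m + 1))ᵀ *ᵥ r (m + 1)) with hvdef
        set Yv : Fin n → ℝ := (Y (m + 1)) *ᵥ v with hYvdef
        have hSr : (S (m + 1))ᵀ *ᵥ r (m + 1) = 0 := by
          funext t
          rw [hSTdot]
          obtain ⟨ct, hct0, hcts⟩ := hsd (t.1 + 1) (by omega) t.isLt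
          rw [hcts, smul_dotProduct, hri_eq, O2 (t.1 + 1) (by omega) t.isLt]
          simp
        have hrCGrep : ∀ l, l ≤ m + 1 → ∃ u : Fin (m + 1) → ℝ,
            rCG l = r (m + 1) + (Y (m + 1)) *ᵥ u := by
          intro l hl
          rcases eq_or_lt_of_le hl with rfl | hlt
          · exact ⟨0, by rw [mulVec_zero, add_zero, hri_eq]⟩
          · have hrl : r l = rCG l := (hxr l (by omega)).2
            have ht := htel l (m + 1) (by omega)
            refine ⟨fun t => if l ≤ t.1 then -α (t.1 + 1) else 0, ?_⟩
            rw [hYcol]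
            have hsum : ∑ t : Fin (m + 1), (if l ≤ t.1 then -α (t.1 + 1) else 0) • y (t.1 + 1)
                = -∑ j ∈ Finset.Ico l (m + 1), α (j + 1) • y (j + 1) := by
              rw [Fin.sum_univ_eq_sum_range
                (fun j => (if l ≤ j then -α (j + 1) else 0) • y (j + 1)) (m + 1)]
              have hflt : Finset.Ico l (m + 1)
                  = (Finset.range (m + 1)).filter (fun j => l ≤ j) := by
                ext j
                simp only [Finset.mem_Ico, Finset.mem_range, Finset.mem_filter]
                omega
              rw [hflt, Finset.sum_filter, ← Finset.sum_neg_distrib]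
              refine Finset.sum_congr rfl fun j _ => ?_
              split_ifs with hc
              · rw [neg_smul]
              · rw [zero_smul, neg_zero]
            rw [hsum, ← hrl, ht]
            abel
        have hu'ex : ∃ u' : ℕ → Fin (m + 1) → ℝ, ∀ l, l ≤ m + 1 →
            rCG l = r (m + 1) + (Y (m + 1)) *ᵥ u' l := by
          choose f hf using hrCGrep
          exact ⟨fun l => if hl : l ≤ m + 1 then f l hl else 0, fun l hl => by
            simp only [dif_pos hl]; exact hf l hl⟩
        obtain ⟨u', hu'⟩ := hu'ex
        have hdrep : ∀ j, 1 ≤ j → j ≤ m + 1 + 1 → ∃ (ν : ℝ) (u : Fin (m + 1) → ℝ),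
            d j = ν • r (m + 1) + (Y (m + 1)) *ᵥ u := by
          intro j h1 hj
          obtain ⟨l', rfl⟩ : ∃ l', j = l' + 1 := ⟨j - 1, by omega⟩
          obtain ⟨γ, hγ⟩ := d_span rCG d _ hd1 hd l'
          refine ⟨∑ l ∈ Finset.range (l' + 1), γ l,
            ∑ l ∈ Finset.range (l' + 1), γ l • u' l, ?_⟩
          rw [hγ]
          have hterm : ∀ l ∈ Finset.range (l' + 1), γ l • rCG l
              = γ l • r (m + 1) + (Y (m + 1)) *ᵥ (γ l • u' l) := by
            intro l hl
            rw [hu' l (by simp only [Finset.mem_range] at hl; omega), smul_add, mulVec_smul]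
          rw [Finset.sum_congr rfl hterm, Finset.sum_add_distrib, ← Finset.sum_smul,
            ← mulVec_sum']
        have hsrep : ∀ t : Fin (m + 1), ∃ (ν : ℝ) (u : Fin (m + 1) → ℝ),
            s (t.1 + 1) = ν • r (m + 1) + (Y (m + 1)) *ᵥ u := by
          intro t
          obtain ⟨ct, hct0, hcts⟩ := hsd (t.1 + 1) (by omega) t.isLt
          obtain ⟨ν, u, hu⟩ := hdrep (t.1 + 1) (by omega) (by omega)
          exact ⟨ct * ν, ct • u, by rw [hcts, hu, smul_add, smul_smul, mulVec_smul]⟩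
        choose μf uf hμu using hsrep
        have hSv : (S (m + 1)) *ᵥ v = (∑ t : Fin (m + 1), v t * μf t) • r (m + 1)
            + (Y (m + 1)) *ᵥ (∑ t : Fin (m + 1), v t • uf t) := by
          rw [hScol]
          have hterm : ∀ t ∈ (Finset.univ : Finset (Fin (m + 1))), v t • s (t.1 + 1)
              = (v t * μf t) • r (m + 1) + (Y (m + 1)) *ᵥ (v t • uf t) := by
            intro t _
            rw [hμu t, smul_add, smul_smul, mulVec_smul]
          rw [Finset.sum_congr rfl hterm, Finset.sum_add_distrib, ← Finset.sum_smul,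
            ← mulVec_sum']
        set μ : ℝ := ∑ t : Fin (m + 1), v t * μf t with hμdef
        set uu : Fin (m + 1) → ℝ := ∑ t : Fin (m + 1), v t • uf t with huudef
        have hH₀Y : H₀ * Y (m + 1) = a⁻¹ • Y (m + 1) := by
          rw [hH₀def, Matrix.smul_mul, Matrix.one_mul]
        have hGYY : ∀ u : Fin (m + 1) → ℝ,
            G *ᵥ ((Y (m + 1))ᵀ *ᵥ ((Y (m + 1)) *ᵥ u)) = u := by
          intro u
          rw [mulVec_mulVec, mulVec_mulVec, Matrix.mul_assoc, hG1, one_mulVec]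
        have hUv : (U (m + 1))ᵀ *ᵥ r (m + 1) = v := by
          rw [hUi, transpose_mul, hGs, ← mulVec_mulVec]
        have hUz : ∀ z, (U (m + 1)) *ᵥ z = (Y (m + 1)) *ᵥ (G *ᵥ z) := by
          intro z
          rw [hUi, ← mulVec_mulVec]
        have hΔv : (Δ (m + 1)) *ᵥ v = μ • r (m + 1) + (Y (m + 1)) *ᵥ uu - a⁻¹ • Yv := by
          rw [hΔ, sub_mulVec, hSv, hH₀Y, smul_mulVec, ← hYvdef]
        have hΔT : (Δ (m + 1))ᵀ *ᵥ r (m + 1) = -(a⁻¹ • ((Y (m + 1))ᵀ *ᵥ r (m + 1))) := by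
          rw [hΔ, hH₀Y, transpose_sub, sub_mulVec, hSr, transpose_smul, smul_mulVec,
            zero_sub]
        have hT2 : (Δ (m + 1) * (U (m + 1))ᵀ) *ᵥ r (m + 1)
            = μ • r (m + 1) + (Y (m + 1)) *ᵥ uu - a⁻¹ • Yv := by
          rw [← mulVec_mulVec, hUv, hΔv]
        have hT3 : (U (m + 1) * (Δ (m + 1))ᵀ) *ᵥ r (m + 1) = -(a⁻¹ • Yv) := by
          rw [← mulVec_mulVec, hΔT, hUz]
          simp only [mulVec_neg, mulVec_smul, ← hvdef, ← hYvdef]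
        have hT4 : (U (m + 1) * (Y (m + 1))ᵀ * Δ (m + 1) * (U (m + 1))ᵀ) *ᵥ r (m + 1)
            = μ • Yv + (Y (m + 1)) *ᵥ uu - a⁻¹ • Yv := by
          rw [← mulVec_mulVec, hUv, ← mulVec_mulVec, hΔv, ← mulVec_mulVec, hUz]
          simp only [mulVec_add, mulVec_sub, mulVec_smul]
          rw [hGYY uu, hYvdef, hGYY v, ← hvdef]
        have hsval : s (m + 1 + 1) = (-(a⁻¹ + μ)) • (r (m + 1) - Yv) := by
          have hs2 : s (m + 1 + 1) = -(H (m + 1) *ᵥ r (m + 1)) := hs (m + 1)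
          have hH2 : H (m + 1) = H₀ + Δ (m + 1) * (U (m + 1))ᵀ + U (m + 1) * (Δ (m + 1))ᵀ
              - U (m + 1) * (Y (m + 1))ᵀ * Δ (m + 1) * (U (m + 1))ᵀ := hH m
          rw [hs2, hH2, sub_mulVec, add_mulVec, add_mulVec, hT2, hT3, hT4,
            hH₀def, smul_mulVec, one_mulVec]
          module
        obtain ⟨ν, u2, hdν⟩ := hdrep (m + 1 + 1) (by omega) le_rfl
        have hYTd : (Y (m + 1))ᵀ *ᵥ d (m + 1 + 1) = 0 := by
          funext t
          rw [hYTdot]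
          obtain ⟨ct, hct0, hcts⟩ := hsd (t.1 + 1) (by omega) t.isLt
          rw [hy t.1, hcts, mulVec_smul, smul_dotProduct, dotProduct_comm,
            O3 (t.1 + 1) (by omega) t.isLt]
          simp
        have hYu2 : (Y (m + 1)) *ᵥ u2 = -(ν • Yv) := by
          have h1 : (Y (m + 1)) *ᵥ (G *ᵥ ((Y (m + 1))ᵀ *ᵥ d (m + 1 + 1))) = 0 := by
            rw [hYTd, mulVec_zero, mulVec_zero]
          rw [hdν] at h1
          simp only [mulVec_add, mulVec_smul] at h1
          rw [hGYY u2, ← hvdef, ← hYvdef] at h1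
          exact eq_neg_of_add_eq_zero_right h1
        have hdval : d (m + 1 + 1) = ν • (r (m + 1) - Yv) := by
          rw [hdν, hYu2, smul_sub]
          abel
        have hν0 : ν ≠ 0 := by
          intro h0
          rw [h0, zero_smul] at hdval
          rw [hdval, zero_dotProduct] at O4
          exact hnz (m + 1) le_rfl (dotProduct_self_eq_zero.mp (neg_eq_zero.mp O4.symm))
        refine ⟨-(a⁻¹ + μ) / ν, ?_, ?_⟩
        · intro h0
          apply hs1ne
          have hz : -(a⁻¹ + μ) = 0 := by
            rcases div_eq_zero_iff.mp h0 with h | h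
            · exact h
            · exact absurd h hν0
          rw [hsval, hz, zero_smul]
        · rw [hsval, hdval, smul_smul]
          congr 1
          field_simp
    obtain ⟨c, hc0, hcd⟩ := key
    have hstepeq : α (i + 1) • s (i + 1) = αCG (i + 1) • d (i + 1) := by
      rw [hα i, hy i, hαCG i, hcd, hri_eq]
      rw [smul_dotProduct, mulVec_smul, dotProduct_smul, smul_dotProduct, smul_smul]
      congr 1
      rw [smul_eq_mul, smul_eq_mul]
      rcases eq_or_ne (d (i + 1) ⬝ᵥ A *ᵥ d (i + 1)) 0 with h0 | h0
      · rw [h0]; simp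
      · field_simp; ring
    constructor
    · intro l hl
      rcases Nat.lt_or_ge l (i + 1) with hlt | hge
      · exact hxr l (by omega)
      · have hl1 : l = i + 1 := by omega
        subst hl1
        constructor
        · rw [hx i, hxCG i, (hxr i le_rfl).1, hstepeq]
        · rw [hr i, hy i, hri_eq, ← mulVec_smul, hstepeq, mulVec_smul, ← hrstep i]
    · intro j h1 hj
      rcases Nat.lt_or_ge j (i + 1) with hlt | hge
      · exact hsd j h1 (by omega)
      · have hj1 : j = i + 1 := by omega
        subst hj1
        exact ⟨c, hc0, hcd⟩
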